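/- arXiv:2202.03710 — 4 statements merged into one kernel-verified Lean document; each statement's English description precedes it below -/
import Mathlib

section
/- Let μ : ℝ → ℝ be analytic near ξ₀ with μ'(ξ₀) = 0, μ''(ξ₀) > 0 and μ'''(ξ₀) < 0. Then there exists e⋆ > μ(ξ₀) such that for every e ∈ (μ(ξ₀), e⋆), the equation μ(ξ) = e has exactly two solutions ξ₋ < ξ₀ < ξ₊ near ξ₀, and μ'(ξ₋) + μ'(ξ₊) < 0. -/
open Set

lemma mvt_pow_bound {h h' : ℝ → ℝ} {δ K : ℝ} {n : ℕ} (hK : 0 ≤ K) (h0 : h 0 = 0)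
    (hd : ∀ s ∈ Icc (-δ) δ, HasDerivAt h (h' s) s)
    (hb : ∀ s ∈ Icc (-δ) δ, |h' s| ≤ K * |s| ^ n)
    {t : ℝ} (ht : t ∈ Icc (-δ) δ) : |h t| ≤ K * |t| ^ (n + 1) := by
  have habs : |t| ≤ δ := abs_le.2 ⟨ht.1, ht.2⟩
  have hsub : Icc (-|t|) |t| ⊆ Icc (-δ) δ :=
    Icc_subset_Icc (by linarith) habs
  have h0m : (0:ℝ) ∈ Icc (-|t|) |t| := ⟨neg_nonpos.2 (abs_nonneg t), abs_nonneg t⟩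
  have htm : t ∈ Icc (-|t|) |t| := ⟨neg_abs_le t, le_abs_self t⟩
  have key := Convex.norm_image_sub_le_of_norm_hasDerivWithin_le
    (f := h) (f' := h') (C := K * |t| ^ n)
    (fun x hx => (hd x (hsub hx)).hasDerivWithinAt)
    (fun x hx => by
      have hxt : |x| ≤ |t| := abs_le.2 ⟨hx.1, hx.2⟩
      calc ‖h' x‖ = |h' x| := rfl
        _ ≤ K * |x| ^ n := hb x (hsub hx)
        _ ≤ K * |t| ^ n :=
            mul_le_mul_of_nonneg_left (pow_le_pow_left₀ (abs_nonneg x) hxt n) hK)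
    (convex_Icc _ _) h0m htm
  have key' : |h t - h 0| ≤ K * |t| ^ n * |t - 0| := key
  rw [h0, sub_zero, sub_zero] at key'
  calc |h t| ≤ K * |t| ^ n * |t| := key'
    _ = K * |t| ^ (n + 1) := by ring

lemma shift_hasDerivAt {f : ℝ → ℝ} {U : Set ℝ} (hU : AnalyticOnNhd ℝ f U)
    {ξ₀ s : ℝ} (hs : ξ₀ + s ∈ U) :
    HasDerivAt (fun t => f (ξ₀ + t)) (deriv f (ξ₀ + s)) s := by
  have h1 : HasDerivAt f (deriv f (ξ₀ + s)) (ξ₀ + s) :=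
    ((hU _ hs).differentiableAt).hasDerivAt
  have h2 : HasDerivAt (fun t : ℝ => ξ₀ + t) 1 s := (hasDerivAt_id s).const_add ξ₀
  have h3 := h1.comp s h2
  rw [mul_one] at h3
  exact h3


lemma final_arith (a b M hp hm p m Ep Em Fp Fm : ℝ)
    (hb : b < 0) (hM : 0 < M)
    (hp0 : 0 < hp) (hm0 : 0 < hm) (hsr : 12*M*(hp+hm) ≤ -b)
    (hEp : |Ep| ≤ M*hp^4) (hEm : |Em| ≤ M*hm^4)
    (hFp : |Fp| ≤ M*hp^3) (hFm : |Fm| ≤ M*hm^3)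
    (heq : a*hp^2 + b*hp^3 + Ep = a*hm^2 - b*hm^3 + Em)
    (hpdef : p = 2*a*hp + 3*b*hp^2 + Fp)
    (hmdef : m = -(2*a*hm) + 3*b*hm^2 + Fm) :
    m + p < 0 := by
  have hs0 : 0 < hp + hm := by linarith
  have key : (m+p)*(hp+hm) = b*(hp+hm)^3 + 2*(Em - Ep) + (Fp+Fm)*(hp+hm) := by
    rw [hpdef, hmdef]; linear_combination 2*heq
  have b1 : Em - Ep ≤ M*hp^4 + M*hm^4 := by
    have := abs_le.mp hEp; have := abs_le.mp hEm; linarith [this.1, this.2]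
  have b2 : Fp + Fm ≤ M*hp^3 + M*hm^3 := by
    have := abs_le.mp hFp; have := abs_le.mp hFm; linarith [this.1, this.2]
  have c1 : hp^4 ≤ (hp+hm)^4 := pow_le_pow_left₀ hp0.le (by linarith) 4
  have c2 : hm^4 ≤ (hp+hm)^4 := pow_le_pow_left₀ hm0.le (by linarith) 4
  have c3 : hp^3 ≤ (hp+hm)^3 := pow_le_pow_left₀ hp0.le (by linarith) 3
  have c4 : hm^3 ≤ (hp+hm)^3 := pow_le_pow_left₀ hm0.le (by linarith) 3
  have d1 : M*hp^4 ≤ M*(hp+hm)^4 := mul_le_mul_of_nonneg_left c1 hM.le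
  have d2 : M*hm^4 ≤ M*(hp+hm)^4 := mul_le_mul_of_nonneg_left c2 hM.le
  have d3 : M*hp^3 ≤ M*(hp+hm)^3 := mul_le_mul_of_nonneg_left c3 hM.le
  have d4 : M*hm^3 ≤ M*(hp+hm)^3 := mul_le_mul_of_nonneg_left c4 hM.le
  have b2s : (Fp+Fm)*(hp+hm) ≤ (2*M*(hp+hm)^3)*(hp+hm) :=
    mul_le_mul_of_nonneg_right (by linarith) hs0.le
  have hid : (2*M*(hp+hm)^3)*(hp+hm) = 2*M*(hp+hm)^4 := by ring
  have hup : (m+p)*(hp+hm) ≤ b*(hp+hm)^3 + 6*M*(hp+hm)^4 := by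
    rw [key]; rw [hid] at b2s; linarith
  have hfac : b*(hp+hm)^3 + 6*M*(hp+hm)^4 = (hp+hm)^3*(b + 6*M*(hp+hm)) := by ring
  have hneg : (hp+hm)^3*(b + 6*M*(hp+hm)) < 0 :=
    mul_neg_of_pos_of_neg (pow_pos hs0 3) (by linarith)
  have hfin : (m+p)*(hp+hm) < 0 := by rw [hfac] at hup; linarith
  by_contra hcon
  push_neg at hcon
  have := mul_nonneg hcon hs0.le
  linarith

set_option maxHeartbeats 2000000 in
/-- Negativity of the algebraic current near a non-degenerate analytic minimum with
negative third derivative. -/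
theorem stmt0 (μ : ℝ → ℝ) (ξ₀ : ℝ) (hA : AnalyticAt ℝ μ ξ₀)
    (h1 : deriv μ ξ₀ = 0) (h2 : 0 < iteratedDeriv 2 μ ξ₀) (h3 : iteratedDeriv 3 μ ξ₀ < 0) :
    ∃ estar > μ ξ₀, ∃ r > (0:ℝ), ∀ e ∈ Set.Ioo (μ ξ₀) estar,
      ∃ ξm ξp : ℝ, ξm ∈ Set.Ioo (ξ₀ - r) ξ₀ ∧ ξp ∈ Set.Ioo ξ₀ (ξ₀ + r) ∧
        μ ξm = e ∧ μ ξp = e ∧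
        (∀ ξ ∈ Set.Ioo (ξ₀ - r) (ξ₀ + r), μ ξ = e → ξ = ξm ∨ ξ = ξp) ∧
        deriv μ ξm + deriv μ ξp < 0 := by
  obtain ⟨U, hUsub, hUo, hxU⟩ := Filter.eventually_iff.mp hA.eventually_analyticAt |> mem_nhds_iff.mp
  have hUan : AnalyticOnNhd ℝ μ U := fun x hx => hUsub hx
  have hμ1 : AnalyticOnNhd ℝ (deriv μ) U := hUan.deriv
  have hμ2 : AnalyticOnNhd ℝ (deriv (deriv μ)) U := hμ1.deriv
  have hμ3 : AnalyticOnNhd ℝ (deriv (deriv (deriv μ))) U := hμ2.deriv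
  have hμ4 : AnalyticOnNhd ℝ (deriv (deriv (deriv (deriv μ)))) U := hμ3.deriv
  obtain ⟨ε, hε0, hball⟩ := Metric.isOpen_iff.mp hUo ξ₀ hxU
  set δ := ε/2 with hδdef
  have hδ0 : 0 < δ := by positivity
  have hIcc : Icc (ξ₀ - δ) (ξ₀ + δ) ⊆ U := by
    intro x hx
    apply hball
    rw [Real.ball_eq_Ioo]
    constructor
    · have := hx.1; simp only [hδdef] at this ⊢; linarith
    · have := hx.2; simp only [hδdef] at this ⊢; linarith
  have hmemU : ∀ s ∈ Icc (-δ) δ, ξ₀ + s ∈ U := by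
    intro s hs
    exact hIcc ⟨by linarith [hs.1], by linarith [hs.2]⟩
  -- coefficients
  have i2 : iteratedDeriv 2 μ = deriv (deriv μ) := by
    rw [iteratedDeriv_succ, iteratedDeriv_one]
  have i3 : iteratedDeriv 3 μ = deriv (deriv (deriv μ)) := by
    rw [iteratedDeriv_succ, i2]
  set a := deriv (deriv μ) ξ₀ / 2 with hadef
  set b := deriv (deriv (deriv μ)) ξ₀ / 6 with hbdef
  have ha0 : 0 < a := by rw [hadef]; rw [i2] at h2; linarith
  have hb0 : b < 0 := by rw [hbdef]; rw [i3] at h3; linarith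
  -- bound on fourth derivative
  obtain ⟨C0, hC0⟩ := (isCompact_Icc (a := ξ₀ - δ) (b := ξ₀ + δ)).exists_bound_of_continuousOn
    ((hμ4.continuousOn).mono hIcc)
  set M := max C0 1 with hMdef
  have hM1 : (1:ℝ) ≤ M := le_max_right _ _
  have hM0 : (0:ℝ) < M := by linarith
  -- derivative chains
  have hd3 : ∀ s ∈ Icc (-δ) δ,
      HasDerivAt (fun t => deriv (deriv (deriv μ)) (ξ₀ + t) - 6*b)
        (deriv (deriv (deriv (deriv μ))) (ξ₀ + s)) s := by
    intro s hs
    have h := (shift_hasDerivAt hμ3 (hmemU s hs)).sub (hasDerivAt_const s (6*b))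
    rw [sub_zero] at h
    exact h
  have hd2 : ∀ s ∈ Icc (-δ) δ,
      HasDerivAt (fun t => deriv (deriv μ) (ξ₀ + t) - (2*a + 6*b*t))
        (deriv (deriv (deriv μ)) (ξ₀ + s) - 6*b) s := by
    intro s hs
    have hp : HasDerivAt (fun t : ℝ => 2*a + 6*b*t) (6*b) s := by
      have h := ((hasDerivAt_id s).const_mul (6*b)).const_add (2*a)
      rw [mul_one] at h
      exact h
    exact (shift_hasDerivAt hμ2 (hmemU s hs)).sub hp
  have hd1 : ∀ s ∈ Icc (-δ) δ,
      HasDerivAt (fun t => deriv μ (ξ₀ + t) - (2*a*t + 3*b*t^2))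
        (deriv (deriv μ) (ξ₀ + s) - (2*a + 6*b*s)) s := by
    intro s hs
    have hp : HasDerivAt (fun t : ℝ => 2*a*t + 3*b*t^2) (2*a + 6*b*s) s := by
      have h := ((hasDerivAt_id s).const_mul (2*a)).add ((hasDerivAt_pow 2 s).const_mul (3*b))
      rw [show (2:ℕ) - 1 = 1 from rfl] at h
      have e : 2*a*1 + 3*b*(((2:ℕ):ℝ) * s^1) = 2*a + 6*b*s := by push_cast; ring
      rw [e] at h
      exact h
    exact (shift_hasDerivAt hμ1 (hmemU s hs)).sub hp
  have hd0 : ∀ s ∈ Icc (-δ) δ,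
      HasDerivAt (fun t => μ (ξ₀ + t) - (μ ξ₀ + a*t^2 + b*t^3))
        (deriv μ (ξ₀ + s) - (2*a*s + 3*b*s^2)) s := by
    intro s hs
    have hp : HasDerivAt (fun t : ℝ => μ ξ₀ + a*t^2 + b*t^3) (2*a*s + 3*b*s^2) s := by
      have h := (((hasDerivAt_pow 2 s).const_mul a).const_add (μ ξ₀)).add
        ((hasDerivAt_pow 3 s).const_mul b)
      rw [show (2:ℕ) - 1 = 1 from rfl, show (3:ℕ) - 1 = 2 from rfl] at h
      have e : a*(((2:ℕ):ℝ) * s^1) + b*(((3:ℕ):ℝ) * s^2) = 2*a*s + 3*b*s^2 := by push_cast; ring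
      rw [e] at h
      exact h
    exact (shift_hasDerivAt hUan (hmemU s hs)).sub hp
  -- Taylor remainder bounds
  have hg3b : ∀ t ∈ Icc (-δ) δ,
      |deriv (deriv (deriv μ)) (ξ₀ + t) - 6*b| ≤ M * |t| ^ 1 := by
    intro t ht
    refine mvt_pow_bound (n := 0) hM0.le ?_ hd3 ?_ ht
    · simp [hbdef]; ring
    · intro s hs
      simp only [pow_zero, mul_one]
      calc |deriv (deriv (deriv (deriv μ))) (ξ₀ + s)| ≤ C0 := hC0 _ ⟨by linarith [hs.1], by linarith [hs.2]⟩
        _ ≤ M := le_max_left _ _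
  have hg2b : ∀ t ∈ Icc (-δ) δ,
      |deriv (deriv μ) (ξ₀ + t) - (2*a + 6*b*t)| ≤ M * |t| ^ 2 := by
    intro t ht
    refine mvt_pow_bound (n := 1) hM0.le ?_ hd2 hg3b ht
    simp [hadef]; ring
  have hg1b : ∀ t ∈ Icc (-δ) δ,
      |deriv μ (ξ₀ + t) - (2*a*t + 3*b*t^2)| ≤ M * |t| ^ 3 := by
    intro t ht
    refine mvt_pow_bound (n := 2) hM0.le ?_ hd1 hg2b ht
    simp [h1]
  have hg0b : ∀ t ∈ Icc (-δ) δ,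
      |μ (ξ₀ + t) - (μ ξ₀ + a*t^2 + b*t^3)| ≤ M * |t| ^ 4 := by
    intro t ht
    refine mvt_pow_bound (n := 3) hM0.le ?_ hd0 hg1b ht
    simp
  -- choice of r
  have hMb : 0 < M - 3*b := by linarith
  set r := min δ (min 1 (min (a/(M - 3*b)) (min (a/M) (-b/(24*M))))) with hrdef
  have hr0 : 0 < r := by
    refine lt_min hδ0 (lt_min one_pos (lt_min ?_ (lt_min ?_ ?_)))
    · exact div_pos ha0 hMb
    · exact div_pos ha0 hM0
    · exact div_pos (by linarith) (by linarith)
  have hrδ : r ≤ δ := min_le_left _ _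
  have hr1 : r ≤ 1 := le_trans (min_le_right _ _) (min_le_left _ _)
  have hra : r ≤ a/(M - 3*b) :=
    le_trans (min_le_right _ _) (le_trans (min_le_right _ _) (min_le_left _ _))
  have hrM : r ≤ a/M :=
    le_trans (min_le_right _ _) (le_trans (min_le_right _ _)
      (le_trans (min_le_right _ _) (min_le_left _ _)))
  have hrb : r ≤ -b/(24*M) :=
    le_trans (min_le_right _ _) (le_trans (min_le_right _ _)
      (le_trans (min_le_right _ _) (min_le_right _ _)))
  -- sign of derivative near ξ₀
  have hpos : ∀ t : ℝ, 0 < t → t ≤ r → a * t ≤ deriv μ (ξ₀ + t) := by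
    intro t ht0 htr
    have htδ : t ≤ δ := le_trans htr hrδ
    have hg := hg1b t ⟨by linarith, htδ⟩
    rw [abs_of_pos ht0, abs_le] at hg
    have k1 : (M - 3*b)*t ≤ a := by
      have := le_trans htr hra
      calc (M - 3*b)*t ≤ (M - 3*b)*(a/(M - 3*b)) := mul_le_mul_of_nonneg_left this hMb.le
        _ = a := by field_simp
    have ht1 : t ≤ 1 := le_trans htr hr1
    have k2 : 0 ≤ a + 3*b*t := by nlinarith [mul_nonneg hM0.le ht0.le]
    have k3 : M*t^3 ≤ a*t^2 + 3*b*t^3 := by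
      nlinarith [mul_le_mul_of_nonneg_right k1 (sq_nonneg t)]
    nlinarith [hg.1, mul_nonneg (mul_nonneg ht0.le (by linarith : (0:ℝ) ≤ 1 - t)) k2]
  have hneg : ∀ t : ℝ, -r ≤ t → t < 0 → deriv μ (ξ₀ + t) ≤ a * t := by
    intro t htr ht0
    have htδ : -δ ≤ t := by linarith
    have hg := hg1b t ⟨htδ, by linarith⟩
    rw [abs_of_neg ht0, abs_le] at hg
    have hmt : (0:ℝ) < -t := neg_pos.2 ht0
    have ht1 : -t ≤ 1 := by linarith [le_trans (by linarith : -t ≤ r) hr1]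
    have k1 : M*(-t) ≤ a := by
      have h' : -t ≤ a/M := le_trans (by linarith) hrM
      calc M*(-t) ≤ M*(a/M) := mul_le_mul_of_nonneg_left h' hM0.le
        _ = a := by field_simp
    have k2 : M*t^2 ≤ a := by
      nlinarith [mul_le_mul_of_nonneg_right k1 hmt.le, mul_le_mul_of_nonneg_left ht1 ha0.le]
    have k3 : a*t - M*t^3 ≤ 0 := by nlinarith [mul_le_mul_of_nonneg_left k2 hmt.le]
    nlinarith [hg.2, mul_pos hmt hmt, sq_nonneg t]
  -- monotonicity
  have hcont : ContinuousOn μ (Icc (ξ₀ - δ) (ξ₀ + δ)) := (hUan.continuousOn).mono hIcc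
  have hmono : StrictMonoOn μ (Icc ξ₀ (ξ₀ + r)) := by
    apply strictMonoOn_of_deriv_pos (convex_Icc _ _)
    · exact hcont.mono (Icc_subset_Icc (by linarith) (by linarith))
    · intro x hx
      rw [interior_Icc] at hx
      have ht0 : 0 < x - ξ₀ := by linarith [hx.1]
      have hax := hpos (x - ξ₀) ht0 (by linarith [hx.2])
      rw [show ξ₀ + (x - ξ₀) = x by ring] at hax
      nlinarith
  have hanti : StrictAntiOn μ (Icc (ξ₀ - r) ξ₀) := by
    apply strictAntiOn_of_deriv_neg (convex_Icc _ _)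
    · exact hcont.mono (Icc_subset_Icc (by linarith) (by linarith))
    · intro x hx
      rw [interior_Icc] at hx
      have ht0 : x - ξ₀ < 0 := by linarith [hx.2]
      have hax := hneg (x - ξ₀) (by linarith [hx.1]) ht0
      rw [show ξ₀ + (x - ξ₀) = x by ring] at hax
      nlinarith
  -- estar
  have hmemL : ξ₀ - r ∈ Icc (ξ₀ - r) ξ₀ := ⟨le_refl _, by linarith⟩
  have hmemR : ξ₀ + r ∈ Icc ξ₀ (ξ₀ + r) := ⟨by linarith, le_refl _⟩
  have h0L : ξ₀ ∈ Icc (ξ₀ - r) ξ₀ := ⟨by linarith, le_refl _⟩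
  have h0R : ξ₀ ∈ Icc ξ₀ (ξ₀ + r) := ⟨le_refl _, by linarith⟩
  have hem : μ ξ₀ < μ (ξ₀ - r) := hanti hmemL h0L (by linarith)
  have hep : μ ξ₀ < μ (ξ₀ + r) := hmono h0R hmemR (by linarith)
  refine ⟨min (μ (ξ₀ - r)) (μ (ξ₀ + r)), lt_min hem hep, r, hr0, ?_⟩
  intro e he
  obtain ⟨he1, he2⟩ := he
  have he2m : e < μ (ξ₀ - r) := lt_of_lt_of_le he2 (min_le_left _ _)
  have he2p : e < μ (ξ₀ + r) := lt_of_lt_of_le he2 (min_le_right _ _)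
  have hcR : ContinuousOn μ (Icc ξ₀ (ξ₀ + r)) :=
    hcont.mono (Icc_subset_Icc (by linarith) (by linarith))
  have hcL : ContinuousOn μ (Icc (ξ₀ - r) ξ₀) :=
    hcont.mono (Icc_subset_Icc (by linarith) (by linarith))
  obtain ⟨ξp, hξp, hμp⟩ := intermediate_value_Ioo (by linarith : ξ₀ ≤ ξ₀ + r) hcR ⟨he1, he2p⟩
  obtain ⟨ξm, hξm, hμm⟩ := intermediate_value_Ioo' (by linarith : ξ₀ - r ≤ ξ₀) hcL ⟨he1, he2m⟩
  have huniq : ∀ ξ ∈ Ioo (ξ₀ - r) (ξ₀ + r), μ ξ = e → ξ = ξm ∨ ξ = ξp := by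
    intro ξ hξ hμξ
    rcases lt_trichotomy ξ ξ₀ with hlt | hEq | hgt
    · left
      exact hanti.injOn ⟨hξ.1.le, hlt.le⟩ ⟨by linarith [hξm.1], hξm.2.le⟩ (by rw [hμξ, hμm])
    · exfalso; rw [hEq] at hμξ; linarith
    · right
      exact hmono.injOn ⟨hgt.le, hξ.2.le⟩ ⟨hξp.1.le, by linarith [hξp.2]⟩ (by rw [hμξ, hμp])
  refine ⟨ξm, ξp, hξm, hξp, hμm, hμp, huniq, ?_⟩
  -- final inequality
  have hp0 : 0 < ξp - ξ₀ := by linarith [hξp.1]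
  have hpr : ξp - ξ₀ < r := by linarith [hξp.2]
  have hm0 : 0 < ξ₀ - ξm := by linarith [hξm.2]
  have hmr : ξ₀ - ξm < r := by linarith [hξm.1]
  have e1 := hg0b (ξp - ξ₀) ⟨by linarith [hrδ], by linarith [hrδ]⟩
  rw [show ξ₀ + (ξp - ξ₀) = ξp by ring, hμp, abs_of_pos hp0] at e1
  have e2 := hg0b (-(ξ₀ - ξm)) ⟨by linarith [hrδ], by linarith [hrδ]⟩
  rw [show ξ₀ + -(ξ₀ - ξm) = ξm by ring, hμm, abs_neg, abs_of_pos hm0] at e2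
  have f1 := hg1b (ξp - ξ₀) ⟨by linarith [hrδ], by linarith [hrδ]⟩
  rw [show ξ₀ + (ξp - ξ₀) = ξp by ring, abs_of_pos hp0] at f1
  have f2 := hg1b (-(ξ₀ - ξm)) ⟨by linarith [hrδ], by linarith [hrδ]⟩
  rw [show ξ₀ + -(ξ₀ - ξm) = ξm by ring, abs_neg, abs_of_pos hm0] at f2
  refine final_arith a b M (ξp - ξ₀) (ξ₀ - ξm) (deriv μ ξp) (deriv μ ξm)
    (e - (μ ξ₀ + a*(ξp - ξ₀)^2 + b*(ξp - ξ₀)^3))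
    (e - (μ ξ₀ + a*(ξ₀ - ξm)^2 - b*(ξ₀ - ξm)^3))
    (deriv μ ξp - (2*a*(ξp - ξ₀) + 3*b*(ξp - ξ₀)^2))
    (deriv μ ξm - (-(2*a*(ξ₀ - ξm)) + 3*b*(ξ₀ - ξm)^2))
    hb0 hM0 hp0 hm0 ?_ ?_ ?_ ?_ ?_ (by ring) (by ring) (by ring)
  · -- 12*M*(s) ≤ -b
    have h24 : 24*M*r ≤ -b := by
      calc 24*M*r ≤ 24*M*(-b/(24*M)) := by
            apply mul_le_mul_of_nonneg_left hrb; positivity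
        _ = -b := by field_simp
    nlinarith [mul_pos hM0 hr0]
  · exact e1
  · convert e2 using 2; ring
  · exact f1
  · convert f2 using 2; ring
end

section
/- Let H be a Hilbert space, T a bijective closed operator with bounded inverse, and C a bounded self-adjoint operator. Suppose there is a constant κ > 0 such that for all u ∈ Dom T, |⟨Tu, u⟩| + ‖Tu‖² ≥ κ ‖u‖². Then ‖T^{-1} C‖ ≤ κ^{-1/2} (‖C‖ + ‖C T^{-1} C‖^{1/2}). -/
/-- Abstract quadratic-estimate lemma: if `|⟨Tu,u⟩| + ‖Tu‖² ≥ κ‖u‖²` on `Dom T` for a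
bijective closed operator `T` with bounded inverse `Tinv`, and `C` is bounded
self-adjoint, then `‖T⁻¹C‖ ≤ κ^{-1/2}(‖C‖ + ‖CT⁻¹C‖^{1/2})`. -/
theorem stmt5 {H : Type*} [NormedAddCommGroup H] [InnerProductSpace ℂ H] [CompleteSpace H]
    (T : H →ₗ.[ℂ] H) (hTclosed : IsClosed (T.graph : Set (H × H)))
    (Tinv C : H →L[ℂ] H) (hC : IsSelfAdjoint C)
    (hleft : ∀ u : T.domain, Tinv (T u) = (u : H))
    (hright : ∀ v : H, ∃ hv : Tinv v ∈ T.domain, T ⟨Tinv v, hv⟩ = v)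
    (κ : ℝ) (hκ : 0 < κ)
    (hcoer : ∀ u : T.domain, κ * ‖(u : H)‖ ^ 2 ≤ ‖(inner ℂ (T u) ((u : H)) : ℂ)‖ + ‖T u‖ ^ 2) :
    ‖Tinv.comp C‖ ≤ Real.sqrt κ⁻¹ * (‖C‖ + Real.sqrt ‖C.comp (Tinv.comp C)‖) := by
  set D := C.comp (Tinv.comp C) with hD
  apply ContinuousLinearMap.opNorm_le_bound
  · positivity
  intro φ
  obtain ⟨hv, hTv⟩ := hright (C φ)
  set u : T.domain := ⟨Tinv (C φ), hv⟩ with hu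
  have hcu := hcoer u
  rw [hTv] at hcu
  have hueq : ((u : H)) = Tinv (C φ) := rfl
  have h1 : ‖(inner ℂ (C φ) ((u : H)) : ℂ)‖ ≤ ‖D‖ * ‖φ‖ ^ 2 := by
    have heq : (inner ℂ (C φ) ((u : H)) : ℂ) = inner ℂ φ (D φ) := by
      conv_lhs => rw [← hC.adjoint_eq]
      rw [ContinuousLinearMap.adjoint_inner_left]
      rfl
    rw [heq]
    calc ‖(inner ℂ φ (D φ) : ℂ)‖ ≤ ‖φ‖ * ‖D φ‖ := norm_inner_le_norm _ _
      _ ≤ ‖φ‖ * (‖D‖ * ‖φ‖) := by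
          exact mul_le_mul_of_nonneg_left (D.le_opNorm φ) (norm_nonneg φ)
      _ = ‖D‖ * ‖φ‖ ^ 2 := by ring
  have h2 : ‖C φ‖ ^ 2 ≤ ‖C‖ ^ 2 * ‖φ‖ ^ 2 := by
    have := C.le_opNorm φ
    nlinarith [norm_nonneg (C φ), norm_nonneg C, norm_nonneg φ]
  have hkey : κ * ‖(u : H)‖ ^ 2 ≤ (‖D‖ + ‖C‖ ^ 2) * ‖φ‖ ^ 2 := by nlinarith
  show ‖Tinv (C φ)‖ ≤ _
  rw [← hueq]
  have hRnn : 0 ≤ Real.sqrt κ⁻¹ * (‖C‖ + Real.sqrt ‖D‖) * ‖φ‖ := by positivity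
  have hsq : ‖(u : H)‖ ^ 2 ≤ (Real.sqrt κ⁻¹ * (‖C‖ + Real.sqrt ‖D‖) * ‖φ‖) ^ 2 := by
    have hs1 : Real.sqrt ‖D‖ ^ 2 = ‖D‖ := Real.sq_sqrt (norm_nonneg D)
    have hs2 : Real.sqrt κ⁻¹ ^ 2 = κ⁻¹ := Real.sq_sqrt (by positivity)
    have h3 : ‖(u : H)‖ ^ 2 ≤ κ⁻¹ * ((‖D‖ + ‖C‖ ^ 2) * ‖φ‖ ^ 2) := by
      calc ‖(u : H)‖ ^ 2 = κ⁻¹ * (κ * ‖(u : H)‖ ^ 2) := by field_simp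
        _ ≤ _ := mul_le_mul_of_nonneg_left hkey (inv_pos.mpr hκ).le
    have h4 : 0 ≤ κ⁻¹ := (inv_pos.mpr hκ).le
    have h5 : (Real.sqrt κ⁻¹ * (‖C‖ + Real.sqrt ‖D‖) * ‖φ‖) ^ 2
        = κ⁻¹ * ((‖C‖ + Real.sqrt ‖D‖) ^ 2 * ‖φ‖ ^ 2) := by
      rw [mul_pow, mul_pow, hs2, mul_assoc]
    have h6 : (‖C‖ + Real.sqrt ‖D‖) ^ 2 = ‖C‖ ^ 2 + 2 * ‖C‖ * Real.sqrt ‖D‖ + ‖D‖ := by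
      rw [add_sq, hs1]
    rw [h5, h6]
    nlinarith [mul_nonneg (mul_nonneg h4 (mul_nonneg (norm_nonneg C) (Real.sqrt_nonneg ‖D‖)))
      (sq_nonneg ‖φ‖)]
  calc ‖(u : H)‖ = Real.sqrt (‖(u : H)‖ ^ 2) := (Real.sqrt_sq (norm_nonneg _)).symm
    _ ≤ Real.sqrt ((Real.sqrt κ⁻¹ * (‖C‖ + Real.sqrt ‖D‖) * ‖φ‖) ^ 2) :=
        Real.sqrt_le_sqrt hsq
    _ = Real.sqrt κ⁻¹ * (‖C‖ + Real.sqrt ‖D‖) * ‖φ‖ := Real.sqrt_sq hRnn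
end

section
/- Let F : (0, ε₀] → [0, ∞) be differentiable with |F'(ε)| ≤ K₁ ε^{-1/2} (c + F(ε)^{1/2}) for constants K₁, c > 0 and all ε ∈ (0, ε₀], and suppose F(ε) ≤ K|ln ε| + F(ε₀) for all ε ∈ (0, ε₀] with ε₀ ≤ 1 and K > 0. Then sup_{ε ∈ (0, ε₀]} F(ε) ≤ F(ε₀) + K₁ ( (c + F(ε₀)^{1/2}) ∫₀¹ t^{-1/2} dt + K^{1/2} ∫₀¹ |ln t|^{1/2} t^{-1/2} dt ). -/
open MeasureTheory intervalIntegral Set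

private theorem sqrt_add_le' (a b : ℝ) (ha : 0 ≤ a) (hb : 0 ≤ b) :
    Real.sqrt (a + b) ≤ Real.sqrt a + Real.sqrt b := by
  have h : a + b ≤ (Real.sqrt a + Real.sqrt b)^2 := by
    have := Real.sq_sqrt ha; have := Real.sq_sqrt hb
    nlinarith [Real.sqrt_nonneg a, Real.sqrt_nonneg b]
  have := Real.sqrt_le_sqrt h
  rwa [Real.sqrt_sq (by positivity)] at this

private theorem int1 : IntervalIntegrable (fun t : ℝ => 1 / Real.sqrt t) volume 0 1 := by
  have h := intervalIntegral.intervalIntegrable_rpow' (a := 0) (b := 1) (r := -(1/2)) (by norm_num)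
  apply h.congr
  rw [Set.uIoc_of_le (by norm_num : (0:ℝ) ≤ 1)]
  intro t ht
  dsimp only
  rw [Real.rpow_neg ht.1.le, one_div, Real.sqrt_eq_rpow]
  norm_num

private theorem int2 :
    IntervalIntegrable (fun t : ℝ => Real.sqrt |Real.log t| / Real.sqrt t) volume 0 1 := by
  have h := (intervalIntegral.intervalIntegrable_rpow' (a := 0) (b := 1) (r := -(3/4))
      (by norm_num)).const_mul (Real.sqrt 2)
  apply h.mono_fun'
  · exact ((Real.measurable_log.abs.sqrt).div
      (Real.continuous_sqrt.measurable)).aestronglyMeasurable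
  · rw [Set.uIoc_of_le (by norm_num : (0:ℝ) ≤ 1)]
    filter_upwards [ae_restrict_mem measurableSet_Ioc] with t ht
    have ht0 : 0 < t := ht.1
    have hlogabs : |Real.log t| ≤ 2 * t ^ (-(1/2) : ℝ) := by
      have h1 : Real.log t ≤ 0 := Real.log_nonpos ht0.le ht.2
      rw [abs_of_nonpos h1]
      have h2 : Real.log (t ^ (-(1/2):ℝ)) ≤ t ^ (-(1/2):ℝ) :=
        (Real.log_le_sub_one_of_pos (Real.rpow_pos_of_pos ht0 _)).trans (by linarith)
      rw [Real.log_rpow ht0] at h2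
      linarith
    have hs : Real.sqrt |Real.log t| ≤ Real.sqrt 2 * t ^ (-(1/4) : ℝ) := by
      calc Real.sqrt |Real.log t| ≤ Real.sqrt (2 * t ^ (-(1/2) : ℝ)) := Real.sqrt_le_sqrt hlogabs
        _ = Real.sqrt 2 * Real.sqrt (t ^ (-(1/2) : ℝ)) := Real.sqrt_mul (by norm_num) _
        _ = Real.sqrt 2 * t ^ (-(1/4) : ℝ) := by
            rw [Real.sqrt_eq_rpow (t ^ (-(1/2):ℝ)), ← Real.rpow_mul ht0.le]; norm_num
    have hnorm : ‖Real.sqrt |Real.log t| / Real.sqrt t‖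
        = Real.sqrt |Real.log t| * t ^ (-(1/2) : ℝ) := by
      rw [Real.norm_eq_abs, abs_of_nonneg (by positivity), div_eq_mul_inv,
        Real.sqrt_eq_rpow t, ← Real.rpow_neg ht0.le]
    show ‖_‖ ≤ _
    rw [hnorm]
    calc Real.sqrt |Real.log t| * t ^ (-(1/2) : ℝ)
        ≤ (Real.sqrt 2 * t ^ (-(1/4) : ℝ)) * t ^ (-(1/2) : ℝ) :=
          mul_le_mul_of_nonneg_right hs (by positivity)
      _ = Real.sqrt 2 * t ^ (-(3/4) : ℝ) := by
          rw [mul_assoc, ← Real.rpow_add ht0]; norm_num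

/-- Bootstrap: a differential inequality with square-root nonlinearity together with an
a priori logarithmic bound yields a uniform bound as `ε ↓ 0`. -/
theorem stmt8 (F : ℝ → ℝ) (ε₀ K₁ c K : ℝ) (hε₀ : 0 < ε₀) (hε₀1 : ε₀ ≤ 1)
    (hK₁ : 0 < K₁) (hc : 0 < c) (hK : 0 < K)
    (hFnn : ∀ ε ∈ Set.Ioc (0:ℝ) ε₀, 0 ≤ F ε)
    (hdiff : ∀ ε ∈ Set.Ioc (0:ℝ) ε₀, DifferentiableAt ℝ F ε)
    (hbound : ∀ ε ∈ Set.Ioc (0:ℝ) ε₀,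
      |deriv F ε| ≤ K₁ / Real.sqrt ε * (c + Real.sqrt (F ε)))
    (hlog : ∀ ε ∈ Set.Ioc (0:ℝ) ε₀, F ε ≤ K * |Real.log ε| + F ε₀) :
    ∀ ε ∈ Set.Ioc (0:ℝ) ε₀,
      F ε ≤ F ε₀ + K₁ * ((c + Real.sqrt (F ε₀)) * (∫ t in (0:ℝ)..1, 1 / Real.sqrt t)
        + Real.sqrt K * ∫ t in (0:ℝ)..1, Real.sqrt |Real.log t| / Real.sqrt t) := by
  intro ε hε
  obtain ⟨hε0, hεε₀⟩ := hε
  have hFε₀nn : 0 ≤ F ε₀ := hFnn ε₀ ⟨hε₀, le_rfl⟩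
  set A : ℝ := K₁ * (c + Real.sqrt (F ε₀)) with hA
  set B : ℝ := K₁ * Real.sqrt K with hB
  have hAnn : 0 ≤ A := by positivity
  have hBnn : 0 ≤ B := by positivity
  set g : ℝ → ℝ := fun t => A * (1 / Real.sqrt t)
      + B * (Real.sqrt |Real.log t| / Real.sqrt t) with hg
  -- membership of Icc ε ε₀ in Ioc 0 ε₀
  have hsub : Set.Icc ε ε₀ ⊆ Set.Ioc (0:ℝ) ε₀ := fun x hx => ⟨lt_of_lt_of_le hε0 hx.1, hx.2⟩
  -- continuity of `g` on [ε, ε₀]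
  have hgcont : ContinuousOn g (Set.Icc ε ε₀) := by
    have hne : ∀ x ∈ Set.Icc ε ε₀, Real.sqrt x ≠ 0 := fun x hx =>
      (Real.sqrt_pos.2 (hsub hx).1).ne'
    have hlogc : ContinuousOn (fun x : ℝ => Real.sqrt |Real.log x|) (Set.Icc ε ε₀) :=
      Real.continuous_sqrt.comp_continuousOn
        (continuous_abs.comp_continuousOn
          (Real.continuousOn_log.mono (fun x hx => (hsub hx).1.ne')))
    exact (continuousOn_const.mul
        (continuousOn_const.div Real.continuous_sqrt.continuousOn hne)).add
      (continuousOn_const.mul (hlogc.div Real.continuous_sqrt.continuousOn hne))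
  have hgint : IntervalIntegrable g volume ε ε₀ := by
    rw [intervalIntegrable_iff_integrableOn_Icc_of_le hεε₀]
    exact hgcont.integrableOn_Icc
  -- the key FTC-type inequality: F ε - F ε₀ ≤ ∫ g
  have hFTC : F ε - F ε₀ ≤ ∫ t in ε..ε₀, g t := by
    have hcont : ContinuousOn (fun x => -F x) (Set.Icc ε ε₀) := fun x hx =>
      ((hdiff x (hsub hx)).continuousAt.neg).continuousWithinAt
    have hderiv : ∀ x ∈ Set.Ioo ε ε₀,
        HasDerivWithinAt (fun x => -F x) (-(deriv F x)) (Set.Ioi x) x := fun x hx =>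
      (((hdiff x (hsub (Set.Ioo_subset_Icc_self hx))).hasDerivAt).neg).hasDerivWithinAt
    have hle : ∀ x ∈ Set.Ioo ε ε₀, -(deriv F x) ≤ g x := by
      intro x hx
      have hxmem : x ∈ Set.Ioc (0:ℝ) ε₀ := hsub (Set.Ioo_subset_Icc_self hx)
      have hx0 : 0 < x := hxmem.1
      have hsx : 0 < Real.sqrt x := Real.sqrt_pos.2 hx0
      have h1 : Real.sqrt (F x) ≤ Real.sqrt K * Real.sqrt |Real.log x| + Real.sqrt (F ε₀) := by
        calc Real.sqrt (F x) ≤ Real.sqrt (K * |Real.log x| + F ε₀) :=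
              Real.sqrt_le_sqrt (hlog x hxmem)
          _ ≤ Real.sqrt (K * |Real.log x|) + Real.sqrt (F ε₀) :=
              sqrt_add_le' _ _ (by positivity) hFε₀nn
          _ = Real.sqrt K * Real.sqrt |Real.log x| + Real.sqrt (F ε₀) := by
              rw [Real.sqrt_mul hK.le]
      have h2 : -(deriv F x) ≤ K₁ / Real.sqrt x * (c + Real.sqrt (F x)) :=
        (neg_le_abs _).trans (hbound x hxmem)
      have h3 : K₁ / Real.sqrt x * (c + Real.sqrt (F x))
          ≤ K₁ / Real.sqrt x * (c + (Real.sqrt K * Real.sqrt |Real.log x| + Real.sqrt (F ε₀))) :=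
        mul_le_mul_of_nonneg_left (by linarith) (by positivity)
      have h4 : K₁ / Real.sqrt x * (c + (Real.sqrt K * Real.sqrt |Real.log x| + Real.sqrt (F ε₀)))
          = g x := by
        simp only [hg, hA, hB]
        field_simp
        ring
      exact le_of_le_of_eq (h2.trans h3) h4
    have := sub_le_integral_of_hasDeriv_right_of_le hεε₀ hcont hderiv
      ((intervalIntegrable_iff_integrableOn_Icc_of_le hεε₀).1 hgint) hle
    linarith
  -- split the integral and compare with the integrals on (0,1)
  have hint1ε : IntervalIntegrable (fun t : ℝ => 1 / Real.sqrt t) volume ε ε₀ := by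
    rw [intervalIntegrable_iff_integrableOn_Icc_of_le hεε₀]
    exact (continuousOn_const.div Real.continuous_sqrt.continuousOn
      (fun x hx => (Real.sqrt_pos.2 (hsub hx).1).ne')).integrableOn_Icc
  have hint2ε : IntervalIntegrable (fun t : ℝ => Real.sqrt |Real.log t| / Real.sqrt t)
      volume ε ε₀ := by
    rw [intervalIntegrable_iff_integrableOn_Icc_of_le hεε₀]
    refine ContinuousOn.integrableOn_Icc (ContinuousOn.div ?_
      Real.continuous_sqrt.continuousOn (fun x hx => (Real.sqrt_pos.2 (hsub hx).1).ne'))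
    exact Real.continuous_sqrt.comp_continuousOn
      (continuous_abs.comp_continuousOn
        (Real.continuousOn_log.mono (fun x hx => (hsub hx).1.ne')))
  have hsplit : (∫ t in ε..ε₀, g t)
      = A * (∫ t in ε..ε₀, 1 / Real.sqrt t)
        + B * ∫ t in ε..ε₀, Real.sqrt |Real.log t| / Real.sqrt t := by
    rw [hg, intervalIntegral.integral_add (hint1ε.const_mul A) (hint2ε.const_mul B),
      intervalIntegral.integral_const_mul, intervalIntegral.integral_const_mul]
  have hmono1 : (∫ t in ε..ε₀, 1 / Real.sqrt t) ≤ ∫ t in (0:ℝ)..1, 1 / Real.sqrt t :=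
    intervalIntegral.integral_mono_interval hε0.le hεε₀ hε₀1
      (Filter.Eventually.of_forall fun t => by positivity) int1
  have hmono2 : (∫ t in ε..ε₀, Real.sqrt |Real.log t| / Real.sqrt t)
      ≤ ∫ t in (0:ℝ)..1, Real.sqrt |Real.log t| / Real.sqrt t :=
    intervalIntegral.integral_mono_interval hε0.le hεε₀ hε₀1
      (Filter.Eventually.of_forall fun t => by positivity) int2
  have hfin : (∫ t in ε..ε₀, g t)
      ≤ A * (∫ t in (0:ℝ)..1, 1 / Real.sqrt t)
        + B * ∫ t in (0:ℝ)..1, Real.sqrt |Real.log t| / Real.sqrt t := by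
    rw [hsplit]
    exact add_le_add (mul_le_mul_of_nonneg_left hmono1 hAnn)
      (mul_le_mul_of_nonneg_left hmono2 hBnn)
  have : A * (∫ t in (0:ℝ)..1, 1 / Real.sqrt t)
        + B * (∫ t in (0:ℝ)..1, Real.sqrt |Real.log t| / Real.sqrt t)
      = K₁ * ((c + Real.sqrt (F ε₀)) * (∫ t in (0:ℝ)..1, 1 / Real.sqrt t)
        + Real.sqrt K * ∫ t in (0:ℝ)..1, Real.sqrt |Real.log t| / Real.sqrt t) := by
    rw [hA, hB]; ring
  linarith
end

section
/- Let L, A be self-adjoint and suppose 𝟙_J(L)[L,iA]𝟙_J(L) ≥ c₀ 𝟙_J(L) with c₀ > 0, that [L,iA] is bounded with ‖[L,iA]‖ ≤ m, and let W be bounded self-adjoint with ‖[W, iA]‖ ≤ w. Let M = L + W and let I ⊂ J with d := dist(I, Jᶜ) > 0. If φ ∈ range 𝟙_I(M) decomposes as φ = φ₁ + φ₂ with φ₁ = 𝟙_J(L)φ and ‖φ₂‖ ≤ c‖φ‖, then ⟨[M, iA]φ, φ⟩ ≥ (c₀(1-c)² - m(2c + c²) - w) ‖φ‖². -/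
private lemma re_inner_ge {H : Type*} [NormedAddCommGroup H] [InnerProductSpace ℂ H]
    (T : H →L[ℂ] H) (m : ℝ) (hm : ‖T‖ ≤ m) (x y : H) :
    -(m * ‖x‖ * ‖y‖) ≤ ((inner ℂ (T x) y : ℂ)).re := by
  have h1 : ‖(inner ℂ (T x) y : ℂ)‖ ≤ ‖T x‖ * ‖y‖ := norm_inner_le_norm _ _
  have h2 : ‖T x‖ ≤ ‖T‖ * ‖x‖ := T.le_opNorm x
  have h3 : |((inner ℂ (T x) y : ℂ)).re| ≤ ‖(inner ℂ (T x) y : ℂ)‖ :=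
    Complex.abs_re_le_norm _
  have h4 : ‖T‖ * ‖x‖ * ‖y‖ ≤ m * ‖x‖ * ‖y‖ := by
    have := mul_nonneg (norm_nonneg x) (norm_nonneg y)
    nlinarith
  nlinarith [norm_nonneg y, norm_nonneg (T x), norm_nonneg x,
    neg_abs_le ((inner ℂ (T x) y : ℂ)).re]

set_option maxHeartbeats 1000000 in
/-- Stability of the Mourre estimate under perturbation: if `[L,iA] ≥ c₀` on the range of
the orthogonal projection `P = 𝟙_J(L)`, `‖[L,iA]‖ ≤ m`, `‖[W,iA]‖ ≤ w`, and
`φ = φ₁ + φ₂` with `φ₁ = Pφ` and `‖φ₂‖ ≤ c‖φ‖`, then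
`⟨[M,iA]φ, φ⟩ ≥ (c₀(1-c)² - m(2c+c²) - w)‖φ‖²` for `M = L + W`. -/
theorem stmt14 {H : Type*} [NormedAddCommGroup H] [InnerProductSpace ℂ H] [CompleteSpace H]
    (L A W P : H →L[ℂ] H) (hL : IsSelfAdjoint L) (hA : IsSelfAdjoint A)
    (hW : IsSelfAdjoint W) (hPsa : IsSelfAdjoint P) (hPid : P.comp P = P)
    (c₀ m w c : ℝ) (hc₀ : 0 < c₀) (hc0 : 0 ≤ c) (hc1 : c ≤ 1)
    (hMourre : ∀ v : H, c₀ * ‖P v‖ ^ 2 ≤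
      ((inner ℂ ((Complex.I • (L.comp A - A.comp L)) (P v)) (P v) : ℂ)).re)
    (hm : ‖Complex.I • (L.comp A - A.comp L)‖ ≤ m)
    (hw : ‖Complex.I • (W.comp A - A.comp W)‖ ≤ w)
    (φ φ₁ φ₂ : H) (hφ₁ : φ₁ = P φ) (hφ₂ : φ₂ = φ - φ₁) (hsmall : ‖φ₂‖ ≤ c * ‖φ‖) :
    (c₀ * (1 - c) ^ 2 - m * (2 * c + c ^ 2) - w) * ‖φ‖ ^ 2 ≤
      ((inner ℂ ((Complex.I • ((L + W).comp A - A.comp (L + W))) φ) φ : ℂ)).re := by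
  set B := Complex.I • (L.comp A - A.comp L) with hB
  set C := Complex.I • (W.comp A - A.comp W) with hC
  have hm0 : 0 ≤ m := le_trans (norm_nonneg _) hm
  have hw0 : 0 ≤ w := le_trans (norm_nonneg _) hw
  have hsum : Complex.I • ((L + W).comp A - A.comp (L + W)) = B + C := by
    ext v
    simp [hB, hC, smul_sub, smul_add]
    abel
  rw [hsum]
  have hφeq : φ = φ₁ + φ₂ := by rw [hφ₂]; abel
  have hadjP : ContinuousLinearMap.adjoint P = P := by
    rw [← ContinuousLinearMap.star_eq_adjoint]; exact hPsa
  have hPP : P (P φ) = P φ := by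
    have := congrArg (fun T : H →L[ℂ] H => T φ) hPid
    simpa using this
  -- ‖φ₁‖ ≤ ‖φ‖
  have hn1 : ‖φ₁‖ ≤ ‖φ‖ := by
    rw [hφ₁]
    have key : (inner ℂ (P φ) φ : ℂ) = inner ℂ (P φ) (P φ) := by
      have h := ContinuousLinearMap.adjoint_inner_right P (P φ) φ
      rw [hadjP, hPP] at h
      exact h.symm
    have hsq : ‖P φ‖ ^ 2 = ((inner ℂ (P φ) φ : ℂ)).re := by
      rw [key]
      have := inner_self_eq_norm_sq (𝕜 := ℂ) (P φ)
      simpa [RCLike.re_to_complex] using this.symm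
    have hle : ‖P φ‖ ^ 2 ≤ ‖P φ‖ * ‖φ‖ := by
      rw [hsq]
      calc ((inner ℂ (P φ) φ : ℂ)).re ≤ |((inner ℂ (P φ) φ : ℂ)).re| := le_abs_self _
        _ ≤ ‖(inner ℂ (P φ) φ : ℂ)‖ := Complex.abs_re_le_norm _
        _ ≤ ‖P φ‖ * ‖φ‖ := norm_inner_le_norm _ _
    by_cases h0 : P φ = 0
    · simp [h0]
    have hpos : 0 < ‖P φ‖ := norm_pos_iff.mpr h0
    nlinarith
  have hn2 : (1 - c) * ‖φ‖ ≤ ‖φ₁‖ := by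
    have : ‖φ‖ ≤ ‖φ₁‖ + ‖φ₂‖ := by rw [hφeq]; exact norm_add_le _ _
    nlinarith
  have hn2' : 0 ≤ (1 - c) * ‖φ‖ := mul_nonneg (by linarith) (norm_nonneg _)
  have hM1 : c₀ * ‖φ₁‖ ^ 2 ≤ ((inner ℂ (B φ₁) φ₁ : ℂ)).re := by
    have := hMourre φ; rw [← hφ₁] at this; exact this
  have hc12 : -(m * ‖φ₁‖ * ‖φ₂‖) ≤ ((inner ℂ (B φ₁) φ₂ : ℂ)).re := re_inner_ge B m hm φ₁ φ₂
  have hc21 : -(m * ‖φ₂‖ * ‖φ₁‖) ≤ ((inner ℂ (B φ₂) φ₁ : ℂ)).re := re_inner_ge B m hm φ₂ φ₁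
  have hc22 : -(m * ‖φ₂‖ * ‖φ₂‖) ≤ ((inner ℂ (B φ₂) φ₂ : ℂ)).re := re_inner_ge B m hm φ₂ φ₂
  have hCb : -(w * ‖φ‖ * ‖φ‖) ≤ ((inner ℂ (C φ) φ : ℂ)).re := re_inner_ge C w hw φ φ
  have hexp : ((inner ℂ ((B + C) φ) φ : ℂ)).re =
      ((inner ℂ (B φ) φ : ℂ)).re + ((inner ℂ (C φ) φ : ℂ)).re := by
    rw [ContinuousLinearMap.add_apply, inner_add_left, Complex.add_re]
  have hBexp : ((inner ℂ (B φ) φ : ℂ)).re =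
      ((inner ℂ (B φ₁) φ₁ : ℂ)).re + ((inner ℂ (B φ₁) φ₂ : ℂ)).re +
      ((inner ℂ (B φ₂) φ₁ : ℂ)).re + ((inner ℂ (B φ₂) φ₂ : ℂ)).re := by
    conv_lhs => rw [hφeq]
    rw [map_add, inner_add_left, inner_add_right, inner_add_right]
    simp [Complex.add_re]
    ring
  rw [hexp, hBexp]
  -- numeric bounds
  have hM1' : c₀ * ((1 - c) * ‖φ‖) ^ 2 ≤ c₀ * ‖φ₁‖ ^ 2 := by
    have := mul_self_le_mul_self hn2' hn2
    nlinarith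
  have h12 : m * ‖φ₁‖ * ‖φ₂‖ ≤ m * c * ‖φ‖ ^ 2 := by
    have h := mul_le_mul hn1 hsmall (norm_nonneg _) (norm_nonneg _)
    nlinarith
  have h22 : m * ‖φ₂‖ * ‖φ₂‖ ≤ m * c ^ 2 * ‖φ‖ ^ 2 := by
    have h := mul_self_le_mul_self (norm_nonneg φ₂) hsmall
    nlinarith
  nlinarith [norm_nonneg φ]
end
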